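/- Let P ∈ ℝ_+^{m×n} be strictly positive. Then min over Q ∈ 𝒬̄ of D(P||Q) equals the min over pairs (T,S) ∈ 𝒫 × 𝒬 of D(T||S), where 𝒬̄ is the set of m×n matrices Q with Q(i,j) = Σ_l S(i,l,j) for some S ∈ 𝒬. -/

import Mathlib

open scoped ENNReal BigOperators

noncomputable def iDivTerm (a b : ℝ) : ℝ≥0∞ :=
  if a = 0 then ENNReal.ofReal b
  else if b = 0 then ⊤
  else ENNReal.ofReal (a * Real.log (a / b) - a + b)

noncomputable def DT {m k n : ℕ} (A B : Fin m → Fin k → Fin n → ℝ) : ℝ≥0∞ :=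
  ∑ i, ∑ l, ∑ j, iDivTerm (A i l j) (B i l j)

noncomputable def DM {m n : ℕ} (A B : Matrix (Fin m) (Fin n) ℝ) : ℝ≥0∞ :=
  ∑ i, ∑ j, iDivTerm (A i j) (B i j)

def memQ {m k n : ℕ} (T : Fin m → Fin k → Fin n → ℝ) : Prop :=
  ∃ (Qm : Matrix (Fin m) (Fin k) ℝ) (Qp : Matrix (Fin k) (Fin n) ℝ),
    (∀ i l, 0 ≤ Qm i l) ∧ (∀ l j, 0 ≤ Qp l j) ∧
    (∀ l, ∑ j, Qp l j = 1) ∧ (∀ i l j, T i l j = Qm i l * Qp l j)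

def memP {m k n : ℕ} (P : Matrix (Fin m) (Fin n) ℝ)
    (T : Fin m → Fin k → Fin n → ℝ) : Prop :=
  (∀ i l j, 0 ≤ T i l j) ∧ (∀ i j, ∑ l, T i l j = P i j)

/-! ### Auxiliary lemmas -/

noncomputable def fdiv (a b : ℝ) : ℝ := a * Real.log (a / b) - a + b

lemma fdiv_nonneg {a b : ℝ} (ha : 0 ≤ a) (hb : 0 ≤ b) (h : a ≠ 0 → 0 < b) :
    0 ≤ fdiv a b := by
  rcases ha.eq_or_lt with h0 | hpos
  · simp [fdiv, ← h0, hb]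
  · have hb' := h hpos.ne'
    have hlog : Real.log (b / a) ≤ b / a - 1 :=
      Real.log_le_sub_one_of_pos (div_pos hb' hpos)
    have hneg : Real.log (a / b) = - Real.log (b / a) := by
      rw [← Real.log_inv]; congr 1; rw [inv_div]
    have hmul := mul_le_mul_of_nonneg_left hlog ha
    have hdiv : a * (b / a - 1) = b - a := by field_simp
    unfold fdiv
    rw [hneg, mul_neg]
    linarith [hmul, hdiv.symm ▸ hmul]
  
lemma iDivTerm_eq {a b : ℝ} (h : a ≠ 0 → b ≠ 0) :
    iDivTerm a b = ENNReal.ofReal (fdiv a b) := by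
  unfold iDivTerm
  by_cases ha : a = 0
  · simp [ha, fdiv]
  · rw [if_neg ha, if_neg (h ha)]; rfl

lemma fdiv_scale {a b c : ℝ} (hc : 0 < c) (hab : a ≠ 0 → 0 < b) :
    fdiv a b = fdiv a (b * c) + a * Real.log c + b - b * c := by
  by_cases ha : a = 0
  · simp [ha, fdiv]
  · have hb := hab ha
    unfold fdiv
    have h1 : a / (b * c) = a / b / c := by ring
    rw [h1, Real.log_div (div_ne_zero ha hb.ne') hc.ne']
    ring

lemma fdiv_logsum {k : ℕ} (a b : Fin k → ℝ) (ha : ∀ l, 0 ≤ a l) (hb : ∀ l, 0 ≤ b l)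
    (hab : ∀ l, a l ≠ 0 → 0 < b l) (hA : 0 < ∑ l, a l) (hB : 0 < ∑ l, b l) :
    fdiv (∑ l, a l) (∑ l, b l) ≤ ∑ l, fdiv (a l) (b l) := by
  set A := ∑ l, a l with hAdef
  set B := ∑ l, b l with hBdef
  have hc : 0 < A / B := div_pos hA hB
  have key : ∀ l ∈ Finset.univ, fdiv (a l) (b l)
      = fdiv (a l) (b l * (A/B)) + a l * Real.log (A/B) + b l - b l * (A/B) :=
    fun l _ => fdiv_scale hc (hab l)
  rw [Finset.sum_congr rfl key]
  have hnn : 0 ≤ ∑ l, fdiv (a l) (b l * (A/B)) :=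
    Finset.sum_nonneg fun l _ => fdiv_nonneg (ha l) (mul_nonneg (hb l) hc.le)
      (fun h => mul_pos (hab l h) hc)
  have hsum : ∑ l, (fdiv (a l) (b l * (A/B)) + a l * Real.log (A/B) + b l - b l * (A/B))
      = (∑ l, fdiv (a l) (b l * (A/B))) + A * Real.log (A/B) + B - B * (A/B) := by
    rw [Finset.sum_sub_distrib, Finset.sum_add_distrib, Finset.sum_add_distrib,
      ← Finset.sum_mul, ← Finset.sum_mul, ← hAdef, ← hBdef]
  rw [hsum]
  have hBc : B * (A / B) = A := by field_simp
  have hfAB : fdiv A B = A * Real.log (A/B) - A + B := rfl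
  rw [hfAB, hBc]
  linarith [hnn]

lemma iDiv_sum_le {k : ℕ} (p : ℝ) (hp : 0 < p) (a b : Fin k → ℝ)
    (ha : ∀ l, 0 ≤ a l) (hb : ∀ l, 0 ≤ b l) (hsum : ∑ l, a l = p) :
    iDivTerm p (∑ l, b l) ≤ ∑ l, iDivTerm (a l) (b l) := by
  by_cases hbad : ∃ l, a l ≠ 0 ∧ b l = 0
  · obtain ⟨l, hl1, hl2⟩ := hbad
    have htop : iDivTerm (a l) (b l) = ⊤ := by simp [iDivTerm, hl1, hl2]
    calc iDivTerm p (∑ l, b l) ≤ ⊤ := le_top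
      _ = iDivTerm (a l) (b l) := htop.symm
      _ ≤ _ := Finset.single_le_sum (f := fun l => iDivTerm (a l) (b l))
        (fun _ _ => zero_le) (Finset.mem_univ l)
  · push_neg at hbad
    have hab : ∀ l, a l ≠ 0 → 0 < b l := fun l h =>
      lt_of_le_of_ne (hb l) (Ne.symm (hbad l h))
    have hA : 0 < ∑ l, a l := hsum ▸ hp
    have hB : 0 < ∑ l, b l := by
      by_contra h
      have hB0 : ∑ l, b l = 0 :=
        le_antisymm (not_lt.mp h) (Finset.sum_nonneg fun l _ => hb l)
      have hb0 : ∀ l ∈ Finset.univ, b l = 0 :=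
        (Finset.sum_eq_zero_iff_of_nonneg (fun l _ => hb l)).mp hB0
      have ha0 : ∀ l ∈ (Finset.univ : Finset (Fin k)), a l = 0 := by
        intro l hl
        by_contra h'
        exact absurd (hb0 l hl) (hab l h').ne'
      exact absurd (Finset.sum_eq_zero ha0) hA.ne'
    rw [iDivTerm_eq (fun _ => hB.ne')]
    have heach : ∀ l ∈ (Finset.univ : Finset (Fin k)),
        iDivTerm (a l) (b l) = ENNReal.ofReal (fdiv (a l) (b l)) :=
      fun l _ => iDivTerm_eq (fun h => (hab l h).ne')
    rw [Finset.sum_congr rfl heach, ← ENNReal.ofReal_sum_of_nonneg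
      (fun l _ => fdiv_nonneg (ha l) (hb l) (hab l))]
    apply ENNReal.ofReal_le_ofReal
    calc fdiv p (∑ l, b l) = fdiv (∑ l, a l) (∑ l, b l) := by rw [hsum]
      _ ≤ _ := fdiv_logsum a b ha hb hab hA hB

lemma iDiv_sum_eq {k : ℕ} (p : ℝ) (hp : 0 < p) (b : Fin k → ℝ) (hb : ∀ l, 0 ≤ b l)
    (hB : 0 < ∑ l, b l) :
    ∑ l, iDivTerm (p * b l / (∑ l', b l')) (b l) = iDivTerm p (∑ l, b l) := by
  set B := ∑ l, b l with hBdef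
  have hnum : ∀ l, (p * b l / B ≠ 0) → b l ≠ 0 := by
    intro l h h0
    exact h (by rw [h0]; ring)
  have heach : ∀ l ∈ (Finset.univ : Finset (Fin k)),
      iDivTerm (p * b l / B) (b l) = ENNReal.ofReal (fdiv (p * b l / B) (b l)) :=
    fun l _ => iDivTerm_eq (hnum l)
  rw [Finset.sum_congr rfl heach, ← ENNReal.ofReal_sum_of_nonneg
    (fun l _ => fdiv_nonneg (div_nonneg (mul_nonneg hp.le (hb l)) hB.le) (hb l)
      (fun h => lt_of_le_of_ne (hb l) (Ne.symm (hnum l h)))),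
    iDivTerm_eq (fun _ => hB.ne')]
  congr 1
  have hterm : ∀ l ∈ (Finset.univ : Finset (Fin k)),
      fdiv (p * b l / B) (b l) = b l * (p/B * Real.log (p/B) - p/B + 1) := by
    intro l _
    rcases (hb l).eq_or_lt with h0 | hpos
    · rw [← h0]; simp [fdiv]
    · unfold fdiv
      have hq : p * b l / B / b l = p / B := by
        field_simp
      rw [hq]
      field_simp
  rw [Finset.sum_congr rfl hterm, ← Finset.sum_mul, ← hBdef]
  unfold fdiv
  field_simp

theorem lifted_min_eq {m n k : ℕ} (P : Matrix (Fin m) (Fin n) ℝ)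
    (hP : ∀ i j, 0 < P i j) :
    sInf {d : ℝ≥0∞ | ∃ S : Fin m → Fin k → Fin n → ℝ, memQ S ∧
        d = DM P (fun i j => ∑ l, S i l j)} =
    sInf {d : ℝ≥0∞ | ∃ (T S : Fin m → Fin k → Fin n → ℝ),
        memP P T ∧ memQ S ∧ d = DT T S} := by
  apply le_antisymm
  · refine le_sInf fun d hd => ?_
    obtain ⟨T, S, hT, hS, rfl⟩ := hd
    obtain ⟨Qm, Qp, hQm, hQp, hrow, hfac⟩ := hS
    have hSnn : ∀ i l j, 0 ≤ S i l j := fun i l j =>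
      (hfac i l j) ▸ mul_nonneg (hQm i l) (hQp l j)
    refine le_trans (sInf_le ⟨S, ⟨Qm, Qp, hQm, hQp, hrow, hfac⟩, rfl⟩) ?_
    simp only [DM, DT]
    refine Finset.sum_le_sum fun i _ => ?_
    rw [Finset.sum_comm]
    refine Finset.sum_le_sum fun j _ => ?_
    exact iDiv_sum_le (P i j) (hP i j) (fun l => T i l j) (fun l => S i l j)
      (fun l => hT.1 i l j) (fun l => hSnn i l j) (hT.2 i j)
  · refine le_sInf fun d hd => ?_
    obtain ⟨S, hS, rfl⟩ := hd
    obtain ⟨Qm, Qp, hQm, hQp, hrow, hfac⟩ := hS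
    have hSnn : ∀ i l j, 0 ≤ S i l j := fun i l j =>
      (hfac i l j) ▸ mul_nonneg (hQm i l) (hQp l j)
    by_cases hQ : ∀ i j, 0 < ∑ l, S i l j
    · set T : Fin m → Fin k → Fin n → ℝ :=
        fun i l j => P i j * S i l j / (∑ l', S i l' j) with hTdef
      have hmemP : memP P T := by
        constructor
        · intro i l j
          have h1 := hQ i j
          have h2 := hSnn i l j
          have h3 := (hP i j).le
          positivity
        · intro i j
          have h1 := (hQ i j).ne'
          simp only [hTdef]
          rw [← Finset.sum_div, ← Finset.mul_sum]
          field_simp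
      have heq : DT T S = DM P (fun i j => ∑ l, S i l j) := by
        simp only [DM, DT]
        refine Finset.sum_congr rfl fun i _ => ?_
        rw [Finset.sum_comm]
        refine Finset.sum_congr rfl fun j _ => ?_
        exact iDiv_sum_eq (P i j) (hP i j) (fun l => S i l j) (fun l => hSnn i l j) (hQ i j)
      exact sInf_le ⟨T, S, hmemP, ⟨Qm, Qp, hQm, hQp, hrow, hfac⟩, heq.symm⟩
    · push_neg at hQ
      obtain ⟨i, j, hij⟩ := hQ
      have h0 : (∑ l, S i l j) = 0 :=
        le_antisymm hij (Finset.sum_nonneg fun l _ => hSnn i l j)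
      have htop : DM P (fun i j => ∑ l, S i l j) = ⊤ := by
        simp only [DM]
        rw [eq_top_iff]
        have h1 : iDivTerm (P i j) (∑ l, S i l j) = ⊤ := by
          simp [iDivTerm, (hP i j).ne', h0]
        calc (⊤:ℝ≥0∞) = iDivTerm (P i j) (∑ l, S i l j) := h1.symm
          _ ≤ ∑ j', iDivTerm (P i j') (∑ l, S i l j') :=
            Finset.single_le_sum (f := fun j' => iDivTerm (P i j') (∑ l, S i l j'))
              (fun _ _ => zero_le) (Finset.mem_univ j)
          _ ≤ _ := Finset.single_le_sum
            (f := fun i' => ∑ j', iDivTerm (P i' j') (∑ l, S i' l j'))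
            (fun _ _ => zero_le) (Finset.mem_univ i)
      rw [htop]
      exact le_top
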